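/- With the setup of the temporal branching process on the infinite n-ary tree with parameter p ∈ (0,1], the expected total number of reachable vertices satisfies E[∑_{ℓ≥0} Z_ℓ] = ∑_{ℓ≥0} (np)^ℓ/ℓ! = e^{np}; in particular the reachable set is almost surely finite. -/

import Mathlib

open MeasureTheory ProbabilityTheory ENNReal

/-- Vertices at depth `ℓ` of the infinite rooted `n`-ary tree are encoded by
`w : Fin ℓ → Fin n` (the sequence of child choices); the edge above the vertex
encoded by a nonempty list `l : List (Fin n)` carries the label `U l`. The vertex `w`
is reachable iff the labels along its root-path are increasing and all at most `p`. -/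
def TemporalReachable {Ω : Type*} (n ℓ : ℕ) (p : ℝ) (U : List (Fin n) → Ω → ℝ)
    (ω : Ω) (w : Fin ℓ → Fin n) : Prop :=
  (StrictMono fun k : Fin ℓ => U ((List.ofFn w).take (k + 1)) ω) ∧
    ∀ k : Fin ℓ, U ((List.ofFn w).take (k + 1)) ω ≤ p


lemma measurableSet_strictMono (ℓ : ℕ) :
    MeasurableSet {x : Fin ℓ → ℝ | StrictMono x} := by
  have : {x : Fin ℓ → ℝ | StrictMono x}
      = ⋂ i, ⋂ j, ⋂ (_ : i < j), {x : Fin ℓ → ℝ | x i < x j} := by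
    ext x; simp [StrictMono, Set.mem_iInter]
  rw [this]
  exact MeasurableSet.iInter fun i => MeasurableSet.iInter fun j =>
    MeasurableSet.iInter fun _ => measurableSet_lt (measurable_pi_apply i) (measurable_pi_apply j)

lemma snoc_mem_iff' {ℓ : ℕ} (Q : ℝ → Prop) (hQ : ∀ u v : ℝ, u ≤ v → Q v → Q u)
    (y : Fin ℓ → ℝ) (a : ℝ) :
    ((∀ i, 0 ≤ (Fin.snoc y a : Fin (ℓ+1) → ℝ) i ∧ Q ((Fin.snoc y a : Fin (ℓ+1) → ℝ) i)) ∧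
        StrictMono (Fin.snoc y a : Fin (ℓ+1) → ℝ))
      ↔ ((0 ≤ a ∧ Q a) ∧ ((∀ j, 0 ≤ y j ∧ y j < a) ∧ StrictMono y)) := by
  constructor
  · rintro ⟨hb, hm⟩
    have hya : ∀ j : Fin ℓ, y j < a := fun j => by
      have := hm (Fin.castSucc_lt_last j)
      simpa using this
    refine ⟨by simpa using hb (Fin.last ℓ), fun j => ⟨by simpa using (hb j.castSucc).1, hya j⟩, ?_⟩
    intro i j hij
    have := hm (show i.castSucc < j.castSucc by simpa)
    simpa using this
  · rintro ⟨⟨ha0, hat⟩, hy, hm⟩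
    constructor
    · intro i
      refine Fin.lastCases ?_ ?_ i
      · simpa using ⟨ha0, hat⟩
      · intro j; simp only [Fin.snoc_castSucc]
        exact ⟨(hy j).1, hQ _ _ (hy j).2.le hat⟩
    · intro i j
      refine Fin.lastCases ?_ (fun j' => ?_) j
      · refine Fin.lastCases ?_ (fun i' => ?_) i <;> intro hij
        · exact absurd hij (lt_irrefl _)
        · simpa using (hy i').2
      · refine Fin.lastCases ?_ (fun i' => ?_) i <;> intro hij
        · exact absurd hij (Fin.castSucc_lt_last j').asymm
        · simp only [Fin.snoc_castSucc]
          exact hm (by simpa using hij)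

lemma snoc_mem_iff {ℓ : ℕ} (y : Fin ℓ → ℝ) (a t : ℝ) :
    ((∀ i, 0 ≤ (Fin.snoc y a : Fin (ℓ+1) → ℝ) i ∧ (Fin.snoc y a : Fin (ℓ+1) → ℝ) i < t) ∧
        StrictMono (Fin.snoc y a : Fin (ℓ+1) → ℝ))
      ↔ ((0 ≤ a ∧ a < t) ∧ ((∀ j, 0 ≤ y j ∧ y j < a) ∧ StrictMono y)) :=
  snoc_mem_iff' (· < t) (fun _ _ huv hv => lt_of_le_of_lt huv hv) y a

lemma snoc_mem_iff_le {ℓ : ℕ} (y : Fin ℓ → ℝ) (a t : ℝ) :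
    ((∀ i, 0 ≤ (Fin.snoc y a : Fin (ℓ+1) → ℝ) i ∧ (Fin.snoc y a : Fin (ℓ+1) → ℝ) i ≤ t) ∧
        StrictMono (Fin.snoc y a : Fin (ℓ+1) → ℝ))
      ↔ ((0 ≤ a ∧ a ≤ t) ∧ ((∀ j, 0 ≤ y j ∧ y j < a) ∧ StrictMono y)) :=
  snoc_mem_iff' (· ≤ t) (fun _ _ huv hv => le_trans huv hv) y a

def simplexLt (ℓ : ℕ) (t : ℝ) : Set (Fin ℓ → ℝ) :=
  {x | (∀ i, 0 ≤ x i ∧ x i < t) ∧ StrictMono x}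

lemma measurableSet_simplexLt (ℓ : ℕ) (t : ℝ) : MeasurableSet (simplexLt ℓ t) := by
  have : simplexLt ℓ t = (⋂ i, {x : Fin ℓ → ℝ | x i ∈ Set.Ico 0 t})
      ∩ {x : Fin ℓ → ℝ | StrictMono x} := by
    ext x; simp [simplexLt, Set.mem_iInter, forall_and]
  rw [this]
  exact MeasurableSet.inter
    (MeasurableSet.iInter fun i => (measurable_pi_apply i) measurableSet_Ico)
    (measurableSet_strictMono ℓ)

lemma volume_simplexLt (ℓ : ℕ) : ∀ t : ℝ, 0 ≤ t →
    Measure.pi (fun _ : Fin ℓ => (volume : Measure ℝ)) (simplexLt ℓ t)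
      = ENNReal.ofReal (t ^ ℓ / ℓ.factorial) := by
  induction ℓ with
  | zero =>
    intro t ht
    have h1 : simplexLt 0 t = Set.univ := by
      ext x
      simp only [simplexLt, Set.mem_setOf_eq, Set.mem_univ, iff_true]
      exact ⟨fun i => i.elim0, fun i j hij => absurd hij (Subsingleton.elim i j ▸ lt_irrefl _)⟩
    rw [h1]
    simp [Measure.pi_univ]
  | succ ℓ ih =>
    intro t ht
    have hmp := measurePreserving_piFinSuccAbove
      (fun _ : Fin (ℓ+1) => (volume : Measure ℝ)) (Fin.last ℓ)
    have hms : MeasurableSet (simplexLt (ℓ+1) t) := measurableSet_simplexLt _ _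
    rw [← (hmp.symm _).measure_preimage hms.nullMeasurableSet]
    have hpre : (MeasurableEquiv.piFinSuccAbove (fun _ : Fin (ℓ+1) => ℝ) (Fin.last ℓ)).symm ⁻¹'
        simplexLt (ℓ+1) t
        = {q : ℝ × (Fin ℓ → ℝ) | Fin.snoc q.2 q.1 ∈ simplexLt (ℓ+1) t} := by
      ext ⟨a, y⟩
      simp only [Set.mem_preimage, Set.mem_setOf_eq, MeasurableEquiv.piFinSuccAbove_symm_apply,
        Fin.insertNthEquiv, Equiv.coe_fn_mk, Fin.insertNth_last']
    rw [hpre]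
    have hsetm : MeasurableSet {q : ℝ × (Fin ℓ → ℝ) | Fin.snoc q.2 q.1 ∈ simplexLt (ℓ+1) t} := by
      have hcont : Measurable (fun q : ℝ × (Fin ℓ → ℝ) => (Fin.snoc q.2 q.1 : Fin (ℓ+1) → ℝ)) := by
        refine measurable_pi_lambda _ fun i => ?_
        refine Fin.lastCases ?_ (fun i' => ?_) i
        · simpa using measurable_fst
        · simpa using (by exact (measurable_pi_apply i').comp measurable_snd :
            Measurable fun c : ℝ × (Fin ℓ → ℝ) => c.2 i')
      exact hcont hms
    rw [Measure.prod_apply hsetm]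
    have hslice : ∀ a : ℝ,
        Measure.pi (fun _ : Fin ℓ => (volume : Measure ℝ))
          (Prod.mk a ⁻¹' {q : ℝ × (Fin ℓ → ℝ) | Fin.snoc q.2 q.1 ∈ simplexLt (ℓ+1) t})
        = (Set.Ico (0:ℝ) t).indicator (fun a => ENNReal.ofReal (a ^ ℓ / ℓ.factorial)) a := by
      intro a
      by_cases ha : a ∈ Set.Ico (0:ℝ) t
      · have : Prod.mk a ⁻¹' {q : ℝ × (Fin ℓ → ℝ) | Fin.snoc q.2 q.1 ∈ simplexLt (ℓ+1) t}
            = simplexLt ℓ a := by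
          ext y
          simp only [Set.mem_preimage, Set.mem_setOf_eq, simplexLt]
          exact (snoc_mem_iff y a t).trans
            ⟨fun h => h.2, fun h => ⟨⟨ha.1, ha.2⟩, h⟩⟩
        rw [this, ih a ha.1, Set.indicator_of_mem ha]
      · have : Prod.mk a ⁻¹' {q : ℝ × (Fin ℓ → ℝ) | Fin.snoc q.2 q.1 ∈ simplexLt (ℓ+1) t}
            = ∅ := by
          ext y
          simp only [Set.mem_preimage, Set.mem_setOf_eq, Set.mem_empty_iff_false, iff_false]
          intro hmem
          have := ((snoc_mem_iff y a t).mp hmem).1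
          exact ha ⟨this.1, this.2⟩
        rw [this, Set.indicator_of_notMem ha]
        simp
    simp_rw [hslice]
    rw [lintegral_indicator measurableSet_Ico]
    have hint : IntegrableOn (fun a : ℝ => a ^ ℓ / (ℓ.factorial : ℝ)) (Set.Ico 0 t) :=
      by
        have h : IntegrableOn (fun a : ℝ => a ^ ℓ) (Set.Ico 0 t) volume :=
          (continuous_pow ℓ).integrableOn_Icc.mono_set Set.Ico_subset_Icc_self
        exact Integrable.div_const h (ℓ.factorial : ℝ)
    rw [← ofReal_integral_eq_lintegral_ofReal hint
      ((ae_restrict_mem measurableSet_Ico).mono fun a ha =>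
        div_nonneg (pow_nonneg ha.1 _) (Nat.cast_nonneg _))]
    congr 1
    rw [MeasureTheory.integral_Ico_eq_integral_Ioo,
      ← MeasureTheory.integral_Ioc_eq_integral_Ioo, ← intervalIntegral.integral_of_le ht]
    rw [intervalIntegral.integral_div, integral_pow]
    rw [Nat.factorial_succ]
    push_cast
    field_simp
    simp

def simplexLe (ℓ : ℕ) (t : ℝ) : Set (Fin ℓ → ℝ) :=
  {x | (∀ i, 0 ≤ x i ∧ x i ≤ t) ∧ StrictMono x}

lemma measurableSet_simplexLe (ℓ : ℕ) (t : ℝ) : MeasurableSet (simplexLe ℓ t) := by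
  have : simplexLe ℓ t = (⋂ i, {x : Fin ℓ → ℝ | x i ∈ Set.Icc 0 t})
      ∩ {x : Fin ℓ → ℝ | StrictMono x} := by
    ext x; simp [simplexLe, Set.mem_iInter, forall_and]
  rw [this]
  exact MeasurableSet.inter
    (MeasurableSet.iInter fun i => (measurable_pi_apply i) measurableSet_Icc)
    (measurableSet_strictMono ℓ)

lemma volume_simplexLe (ℓ : ℕ) (t : ℝ) (ht : 0 ≤ t) :
    Measure.pi (fun _ : Fin ℓ => (volume : Measure ℝ)) (simplexLe ℓ t)
      = ENNReal.ofReal (t ^ ℓ / ℓ.factorial) := by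
  cases ℓ with
  | zero =>
    have h1 : simplexLe 0 t = Set.univ := by
      ext x
      simp only [simplexLe, Set.mem_setOf_eq, Set.mem_univ, iff_true]
      exact ⟨fun i => i.elim0, fun i j hij => absurd hij (Subsingleton.elim i j ▸ lt_irrefl _)⟩
    rw [h1]
    simp [Measure.pi_univ]
  | succ ℓ =>
    have hmp := measurePreserving_piFinSuccAbove
      (fun _ : Fin (ℓ+1) => (volume : Measure ℝ)) (Fin.last ℓ)
    have hms : MeasurableSet (simplexLe (ℓ+1) t) := measurableSet_simplexLe _ _
    rw [← (hmp.symm _).measure_preimage hms.nullMeasurableSet]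
    have hpre : (MeasurableEquiv.piFinSuccAbove (fun _ : Fin (ℓ+1) => ℝ) (Fin.last ℓ)).symm ⁻¹'
        simplexLe (ℓ+1) t
        = {q : ℝ × (Fin ℓ → ℝ) | Fin.snoc q.2 q.1 ∈ simplexLe (ℓ+1) t} := by
      ext ⟨a, y⟩
      simp only [Set.mem_preimage, Set.mem_setOf_eq, MeasurableEquiv.piFinSuccAbove_symm_apply,
        Fin.insertNthEquiv, Equiv.coe_fn_mk, Fin.insertNth_last']
    rw [hpre]
    have hsetm : MeasurableSet {q : ℝ × (Fin ℓ → ℝ) | Fin.snoc q.2 q.1 ∈ simplexLe (ℓ+1) t} := by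
      have hcont : Measurable (fun q : ℝ × (Fin ℓ → ℝ) => (Fin.snoc q.2 q.1 : Fin (ℓ+1) → ℝ)) := by
        refine measurable_pi_lambda _ fun i => ?_
        refine Fin.lastCases ?_ (fun i' => ?_) i
        · simpa using measurable_fst
        · simpa using (by exact (measurable_pi_apply i').comp measurable_snd :
            Measurable fun c : ℝ × (Fin ℓ → ℝ) => c.2 i')
      exact hcont hms
    rw [Measure.prod_apply hsetm]
    have hslice : ∀ a : ℝ,
        Measure.pi (fun _ : Fin ℓ => (volume : Measure ℝ))
          (Prod.mk a ⁻¹' {q : ℝ × (Fin ℓ → ℝ) | Fin.snoc q.2 q.1 ∈ simplexLe (ℓ+1) t})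
        = (Set.Icc (0:ℝ) t).indicator (fun a => ENNReal.ofReal (a ^ ℓ / ℓ.factorial)) a := by
      intro a
      by_cases ha : a ∈ Set.Icc (0:ℝ) t
      · have : Prod.mk a ⁻¹' {q : ℝ × (Fin ℓ → ℝ) | Fin.snoc q.2 q.1 ∈ simplexLe (ℓ+1) t}
            = simplexLt ℓ a := by
          ext y
          simp only [Set.mem_preimage, Set.mem_setOf_eq, simplexLe, simplexLt]
          exact (snoc_mem_iff_le y a t).trans
            ⟨fun h => h.2, fun h => ⟨⟨ha.1, ha.2⟩, h⟩⟩
        rw [this, volume_simplexLt ℓ a ha.1, Set.indicator_of_mem ha]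
      · have : Prod.mk a ⁻¹' {q : ℝ × (Fin ℓ → ℝ) | Fin.snoc q.2 q.1 ∈ simplexLe (ℓ+1) t}
            = ∅ := by
          ext y
          simp only [Set.mem_preimage, Set.mem_setOf_eq, Set.mem_empty_iff_false, iff_false]
          intro hmem
          have := ((snoc_mem_iff_le y a t).mp hmem).1
          exact ha ⟨this.1, this.2⟩
        rw [this, Set.indicator_of_notMem ha]
        simp
    simp_rw [hslice]
    rw [lintegral_indicator measurableSet_Icc]
    have hint : IntegrableOn (fun a : ℝ => a ^ ℓ / (ℓ.factorial : ℝ)) (Set.Icc 0 t) :=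
      by
        have h : IntegrableOn (fun a : ℝ => a ^ ℓ) (Set.Icc 0 t) volume :=
          (continuous_pow ℓ).integrableOn_Icc
        exact Integrable.div_const h (ℓ.factorial : ℝ)
    rw [← ofReal_integral_eq_lintegral_ofReal hint
      ((ae_restrict_mem measurableSet_Icc).mono fun a ha =>
        div_nonneg (pow_nonneg ha.1 _) (Nat.cast_nonneg _))]
    congr 1
    rw [MeasureTheory.integral_Icc_eq_integral_Ioo,
      ← MeasureTheory.integral_Ioc_eq_integral_Ioo, ← intervalIntegral.integral_of_le ht]
    rw [intervalIntegral.integral_div, integral_pow]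
    rw [Nat.factorial_succ]
    push_cast
    field_simp
    simp

lemma pi_restrict_eq (ℓ : ℕ) :
    Measure.pi (fun _ : Fin ℓ => (volume : Measure ℝ).restrict (Set.Icc 0 1))
      = (Measure.pi fun _ : Fin ℓ => (volume : Measure ℝ)).restrict
          (Set.pi Set.univ fun _ => Set.Icc 0 1) := by
  refine Measure.pi_eq fun s hs => ?_
  rw [Measure.restrict_apply (MeasurableSet.univ_pi hs), ← Set.pi_inter_distrib,
    Measure.pi_pi]
  simp_rw [Measure.restrict_apply (hs _)]

lemma measurableSet_target (ℓ : ℕ) (p : ℝ) :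
    MeasurableSet {x : Fin ℓ → ℝ | StrictMono x ∧ ∀ k, x k ≤ p} := by
  have : {x : Fin ℓ → ℝ | StrictMono x ∧ ∀ k, x k ≤ p}
      = {x : Fin ℓ → ℝ | StrictMono x} ∩ ⋂ k, {x : Fin ℓ → ℝ | x k ≤ p} := by
    ext x; simp [Set.mem_iInter]
  rw [this]
  exact (measurableSet_strictMono ℓ).inter
    (MeasurableSet.iInter fun k => measurableSet_le (measurable_pi_apply k) measurable_const)

lemma measure_pi_restrict_target (ℓ : ℕ) (p : ℝ) (h0 : 0 ≤ p) (h1 : p ≤ 1) :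
    Measure.pi (fun _ : Fin ℓ => (volume : Measure ℝ).restrict (Set.Icc 0 1))
      {x | StrictMono x ∧ ∀ k, x k ≤ p}
      = ENNReal.ofReal (p ^ ℓ / ℓ.factorial) := by
  rw [pi_restrict_eq, Measure.restrict_apply (measurableSet_target ℓ p)]
  have : {x : Fin ℓ → ℝ | StrictMono x ∧ ∀ k, x k ≤ p}
      ∩ Set.pi Set.univ (fun _ => Set.Icc (0:ℝ) 1) = simplexLe ℓ p := by
    ext x
    simp only [Set.mem_inter_iff, Set.mem_setOf_eq, Set.mem_pi, Set.mem_univ, forall_true_left,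
      Set.mem_Icc, simplexLe, true_implies]
    constructor
    · rintro ⟨⟨hm, hle⟩, hbox⟩
      exact ⟨fun i => ⟨(hbox i).1, hle i⟩, hm⟩
    · rintro ⟨hb, hm⟩
      exact ⟨⟨hm, fun k => (hb k).2⟩, fun i => ⟨(hb i).1, le_trans (hb i).2 h1⟩⟩
  rw [this]
  exact volume_simplexLe ℓ p h0

lemma joint_law {Ω : Type*} [MeasurableSpace Ω] (μ : Measure Ω) [IsProbabilityMeasure μ]
    {n : ℕ} (U : List (Fin n) → Ω → ℝ) (hmeas : ∀ l, Measurable (U l))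
    (hindep : iIndepFun U μ)
    (hunif : ∀ l, Measure.map (U l) μ = (volume : Measure ℝ).restrict (Set.Icc 0 1))
    {ℓ : ℕ} (g : Fin ℓ → List (Fin n)) (hg : Function.Injective g) :
    Measure.map (fun ω k => U (g k) ω) μ
      = Measure.pi (fun _ : Fin ℓ => (volume : Measure ℝ).restrict (Set.Icc 0 1)) := by
  have hf : Measurable (fun ω (k : Fin ℓ) => U (g k) ω) :=
    measurable_pi_lambda _ fun k => hmeas (g k)
  refine Eq.symm (Measure.pi_eq fun s hs => ?_)
  rw [Measure.map_apply hf (MeasurableSet.univ_pi hs)]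
  have hpre : (fun ω (k : Fin ℓ) => U (g k) ω) ⁻¹' Set.pi Set.univ s
      = ⋂ k, U (g k) ⁻¹' s k := by
    ext ω; simp [Set.mem_pi]
  rw [hpre]
  set s' : List (Fin n) → Set ℝ := fun l => ⋂ k, ⋂ (_ : g k = l), s k with hs'
  have hs'gk : ∀ k, s' (g k) = s k := by
    intro k
    apply Set.Subset.antisymm
    · intro x hx; exact Set.mem_iInter₂.1 hx k rfl
    · intro x hx
      refine Set.mem_iInter₂.2 fun k' hk' => ?_
      rwa [hg hk']
  have hs'meas : ∀ l, MeasurableSet (s' l) :=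
    fun l => MeasurableSet.iInter fun k => MeasurableSet.iInter fun _ => hs k
  have hbi := hindep.meas_biInter (S := Finset.image g Finset.univ)
    (s := fun l => U l ⁻¹' s' l) (fun l _ => ⟨s' l, hs'meas l, rfl⟩)
  have hiInter : (⋂ l ∈ Finset.image g Finset.univ, U l ⁻¹' s' l)
      = ⋂ k, U (g k) ⁻¹' s k := by
    ext ω
    simp only [Set.mem_iInter, Finset.mem_image, Finset.mem_univ, true_and]
    constructor
    · intro h k
      have := h (g k) ⟨k, rfl⟩
      rwa [hs'gk k] at this
    · rintro h l ⟨k, rfl⟩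
      rw [hs'gk k]; exact h k
  rw [hiInter] at hbi
  rw [hbi, Finset.prod_image (fun k _ k' _ h => hg h)]
  refine Finset.prod_congr rfl fun k _ => ?_
  rw [hs'gk k, ← Measure.map_apply (hmeas (g k)) (hs k), hunif (g k)]

def TemporalReachable' {Ω : Type*} (n ℓ : ℕ) (p : ℝ) (U : List (Fin n) → Ω → ℝ)
    (ω : Ω) (w : Fin ℓ → Fin n) : Prop :=
  (StrictMono fun k : Fin ℓ => U ((List.ofFn w).take (k + 1)) ω) ∧
    ∀ k : Fin ℓ, U ((List.ofFn w).take (k + 1)) ω ≤ p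

lemma event_prob {Ω : Type*} [MeasurableSpace Ω] (μ : Measure Ω) [IsProbabilityMeasure μ]
    {n : ℕ} (p : ℝ) (hp0 : 0 ≤ p) (hp1 : p ≤ 1)
    (U : List (Fin n) → Ω → ℝ) (hmeas : ∀ l, Measurable (U l))
    (hindep : iIndepFun U μ)
    (hunif : ∀ l, Measure.map (U l) μ = (volume : Measure ℝ).restrict (Set.Icc 0 1))
    {ℓ : ℕ} (w : Fin ℓ → Fin n) :
    μ {ω | TemporalReachable' n ℓ p U ω w} = ENNReal.ofReal (p ^ ℓ / ℓ.factorial) := by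
  set g : Fin ℓ → List (Fin n) := fun k => (List.ofFn w).take (k + 1) with hgdef
  have hglen : ∀ k : Fin ℓ, (g k).length = (k : ℕ) + 1 := by
    intro k
    simp only [hgdef, List.length_take, List.length_ofFn]
    omega
  have hg : Function.Injective g := by
    intro k k' h
    have := hglen k
    rw [h, hglen k'] at this
    exact Fin.ext (by omega)
  have hf : Measurable (fun ω (k : Fin ℓ) => U (g k) ω) :=
    measurable_pi_lambda _ fun k => hmeas (g k)
  have hev : {ω | TemporalReachable' n ℓ p U ω w}
      = (fun ω (k : Fin ℓ) => U (g k) ω) ⁻¹' {x | StrictMono x ∧ ∀ k, x k ≤ p} := rfl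
  rw [hev, ← Measure.map_apply hf (measurableSet_target ℓ p),
    joint_law μ U hmeas hindep hunif g hg, measure_pi_restrict_target ℓ p hp0 hp1]

theorem expected_total_progeny {Ω : Type*} [MeasurableSpace Ω]
    (μ : Measure Ω) [IsProbabilityMeasure μ] (n : ℕ) (hn : 1 ≤ n)
    (p : ℝ) (hp0 : 0 < p) (hp1 : p ≤ 1)
    (U : List (Fin n) → Ω → ℝ) (hmeas : ∀ l, Measurable (U l))
    (hindep : iIndepFun U μ)
    (hunif : ∀ l, Measure.map (U l) μ = (volume : Measure ℝ).restrict (Set.Icc 0 1)) :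
    (∫⁻ ω, ∑' ℓ : ℕ,
        (Nat.card {w : Fin ℓ → Fin n // TemporalReachable n ℓ p U ω w} : ℝ≥0∞) ∂μ =
        ∑' ℓ : ℕ, ENNReal.ofReal ((n * p) ^ ℓ / Nat.factorial ℓ)) ∧
      (∑' ℓ : ℕ, ENNReal.ofReal ((n * p) ^ ℓ / Nat.factorial ℓ) =
        ENNReal.ofReal (Real.exp (n * p))) ∧
      ∀ᵐ ω ∂μ, (∑' ℓ : ℕ,
        (Nat.card {w : Fin ℓ → Fin n // TemporalReachable n ℓ p U ω w} : ℝ≥0∞)) < ⊤ := by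
  classical
  have hTR : TemporalReachable (Ω := Ω) = TemporalReachable' := rfl
  have hevent : ∀ (ℓ : ℕ) (w : Fin ℓ → Fin n),
      MeasurableSet {ω | TemporalReachable n ℓ p U ω w} := by
    intro ℓ w
    rw [hTR]
    have hf : Measurable (fun ω (k : Fin ℓ) => U ((List.ofFn w).take (k + 1)) ω) :=
      measurable_pi_lambda _ fun k => hmeas _
    exact hf (measurableSet_target ℓ p)
  have hcount : ∀ (ℓ : ℕ) (ω : Ω),
      (Nat.card {w : Fin ℓ → Fin n // TemporalReachable n ℓ p U ω w} : ℝ≥0∞)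
        = ∑ w : Fin ℓ → Fin n,
            Set.indicator {ω' | TemporalReachable n ℓ p U ω' w} (fun _ => 1) ω := by
    intro ℓ ω
    rw [Nat.card_eq_fintype_card, Fintype.card_subtype, Finset.card_filter]
    push_cast
    refine Finset.sum_congr rfl fun w _ => ?_
    rw [Set.indicator_apply]
    simp [Set.mem_setOf_eq]
  have hmeasf : ∀ ℓ : ℕ, Measurable (fun ω : Ω =>
      (Nat.card {w : Fin ℓ → Fin n // TemporalReachable n ℓ p U ω w} : ℝ≥0∞)) := by
    intro ℓ
    simp only [hcount]
    exact Finset.measurable_sum _ fun w _ => (measurable_const.indicator (hevent ℓ w))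
  have hZ : ∀ ℓ : ℕ, ∫⁻ ω, (Nat.card {w : Fin ℓ → Fin n //
        TemporalReachable n ℓ p U ω w} : ℝ≥0∞) ∂μ
      = ENNReal.ofReal ((n * p) ^ ℓ / Nat.factorial ℓ) := by
    intro ℓ
    simp only [hcount]
    rw [lintegral_finset_sum _ fun w _ => (measurable_const.indicator (hevent ℓ w))]
    have : ∀ w : Fin ℓ → Fin n,
        ∫⁻ ω, Set.indicator {ω' | TemporalReachable n ℓ p U ω' w} (fun _ => 1) ω ∂μ
          = ENNReal.ofReal (p ^ ℓ / ℓ.factorial) := by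
      intro w
      rw [show (fun _ : Ω => (1:ℝ≥0∞)) = 1 from rfl, lintegral_indicator_one (hevent ℓ w)]
      rw [hTR]
      exact event_prob μ p hp0.le hp1 U hmeas hindep hunif w
    simp_rw [this]
    rw [Finset.sum_const, Finset.card_univ, Fintype.card_fun, Fintype.card_fin, Fintype.card_fin,
      nsmul_eq_mul]
    rw [← ENNReal.ofReal_natCast, ← ENNReal.ofReal_mul (by positivity)]
    congr 1
    push_cast
    rw [mul_pow, mul_div_assoc]
  have hsummable : Summable (fun ℓ : ℕ => ((n : ℝ) * p) ^ ℓ / ℓ.factorial) :=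
    Real.summable_pow_div_factorial _
  have hpart2 : (∑' ℓ : ℕ, ENNReal.ofReal ((n * p) ^ ℓ / Nat.factorial ℓ))
      = ENNReal.ofReal (Real.exp (n * p)) := by
    rw [← ENNReal.ofReal_tsum_of_nonneg (fun ℓ => by positivity) hsummable]
    congr 1
    rw [Real.exp_eq_exp_ℝ, NormedSpace.exp_eq_tsum_div]
  have hpart1 : ∫⁻ ω, ∑' ℓ : ℕ,
      (Nat.card {w : Fin ℓ → Fin n // TemporalReachable n ℓ p U ω w} : ℝ≥0∞) ∂μ
      = ∑' ℓ : ℕ, ENNReal.ofReal ((n * p) ^ ℓ / Nat.factorial ℓ) := by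
    rw [lintegral_tsum fun ℓ => (hmeasf ℓ).aemeasurable]
    exact tsum_congr hZ
  refine ⟨hpart1, hpart2, ?_⟩
  refine ae_lt_top (by exact Measurable.ennreal_tsum hmeasf) ?_
  rw [hpart1, hpart2]
  exact ENNReal.ofReal_ne_top
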